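/- Let {H^k_a} be the family of Hankel matrices of a vector a = (a_0,...,a_D), with invariants N_1 ≤ N_2 as above. There exist vectors v ∈ K^{N_1+2} and w ∈ K^{N_2+2} such that: for 0 ≤ k ≤ N_1, ker(H^k_a) = {0}; for N_1 < k ≤ N_2, the shifted vectors U^0 v, ..., U^{k−N_1−1} v form a basis of ker(H^k_a); and for N_2 < k ≤ D, the shifts U^0 v,...,U^{k−N_1−1} v together with U^0 w,...,U^{k−N_2−1} w form a basis of ker(H^k_a), where U^i denotes prepending i zeros and appending the appropriate number of zeros to reach the required length k+1. -/

import Mathlib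

/-- Pad a finite vector to a function on `ℕ` by zeros. -/
noncomputable def pad {K : Type*} [Zero K] {n : ℕ} (c : Fin n → K) : ℕ → K :=
  fun i => if h : i < n then c ⟨i, h⟩ else 0

/-- The Hankel matrix `H^k_a ∈ K^{(D-k+1)×(k+1)}` with `(i,j)` entry `a_{i+j}`. -/
noncomputable def hankel {K : Type*} [Field K] (a : ℕ → K) (D k : ℕ) :
    Matrix (Fin (D - k + 1)) (Fin (k + 1)) K :=
  fun i j => a (i.1 + j.1)

/-- The binary form `P_v = ∑ v_i x^i y^{n-i}`. -/
noncomputable def binForm (K : Type*) [Field K] (v : ℕ → K) (n : ℕ) :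
    MvPolynomial (Fin 2) K :=
  ∑ i ∈ Finset.range (n + 1),
    MvPolynomial.C (v i) * MvPolynomial.X 0 ^ i * MvPolynomial.X 1 ^ (n - i)


/-- The `i`-th shift of a vector supported on `[0,n]`. -/
noncomputable def shiftVec {K : Type*} [Zero K] (v : ℕ → K) (i : ℕ) : ℕ → K :=
  fun t => if i ≤ t then v (t - i) else 0


namespace Stmt3Aux

open Polynomial Module Submodule

variable {K : Type*} [Field K]

/-- coefficient vector to polynomial -/
noncomputable def toP (n : ℕ) : (Fin n → K) →ₗ[K] Polynomial K where
  toFun u := ∑ j : Fin n, monomial (j : ℕ) (u j)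
  map_add' u v := by
    simp only [Pi.add_apply, map_add]
    rw [Finset.sum_add_distrib]
  map_smul' c u := by
    simp only [Pi.smul_apply, smul_eq_mul, RingHom.id_apply, Finset.smul_sum, smul_monomial]

lemma toP_coeff (n : ℕ) (u : Fin n → K) (m : ℕ) :
    (toP n u).coeff m = if h : m < n then u ⟨m, h⟩ else 0 := by
  simp only [toP, LinearMap.coe_mk, AddHom.coe_mk, finset_sum_coeff, coeff_monomial]
  split
  · next h =>
    rw [Finset.sum_eq_single (⟨m, h⟩ : Fin n)]
    · simp
    · intro b _ hb
      rw [if_neg]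
      exact fun hbm => hb (Fin.ext hbm)
    · intro habs; exact absurd (Finset.mem_univ _) habs
  · next h =>
    apply Finset.sum_eq_zero; intro b _
    rw [if_neg]
    exact fun hbm => h (hbm ▸ b.isLt)

lemma memLT_iff_coeff (p : K[X]) (n : ℕ) :
    p ∈ degreeLT K n ↔ ∀ m, n ≤ m → p.coeff m = 0 := by
  rw [mem_degreeLT]; exact degree_lt_iff_coeff_zero p n

lemma toP_memLT (n : ℕ) (u : Fin n → K) : toP n u ∈ degreeLT K n := by
  rw [memLT_iff_coeff]; intro m hm; rw [toP_coeff, dif_neg (by omega)]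

lemma toP_inj (n : ℕ) : Function.Injective (toP (K := K) n) := by
  intro u v h
  funext j
  have := congrArg (fun p => Polynomial.coeff p (j : ℕ)) h
  simpa [toP_coeff, j.isLt] using this

lemma toP_coeffs_eq (n : ℕ) (p : K[X]) (hp : p ∈ degreeLT K n) :
    toP n (fun j => p.coeff j) = p := by
  ext m
  rw [toP_coeff]
  split
  · rfl
  · next h => exact ((memLT_iff_coeff p n).1 hp m (by omega)).symm

lemma natDegree_le_of_memLT {n : ℕ} {p : K[X]} (hp : p ∈ degreeLT K (n+1)) :
    p.natDegree ≤ n := by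
  by_cases h : p = 0
  · simp [h]
  · exact Nat.lt_succ_iff.mp ((natDegree_lt_iff_degree_lt h).2 (mem_degreeLT.1 hp))

lemma memLT_of_natDegree_le {n : ℕ} {p : K[X]} (h : p.natDegree ≤ n) :
    p ∈ degreeLT K (n+1) := by
  rw [memLT_iff_coeff]
  intro m hm
  exact coeff_eq_zero_of_natDegree_lt (by omega)

lemma mul_memLT {m n : ℕ} {p q : K[X]} (hp : p ∈ degreeLT K (m+1)) (hq : q ∈ degreeLT K (n+1)) :
    p * q ∈ degreeLT K (m + n + 1) :=
  memLT_of_natDegree_le (le_trans (natDegree_mul_le)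
    (add_le_add (natDegree_le_of_memLT hp) (natDegree_le_of_memLT hq)))

lemma X_pow_mul_memLT {n i r : ℕ} {p : K[X]} (hp : p ∈ degreeLT K n) (h : n + i ≤ r) :
    X^i * p ∈ degreeLT K r := by
  rw [memLT_iff_coeff] at hp ⊢
  intro m hm
  rw [X_pow_mul, coeff_mul_X_pow']
  split
  · exact hp _ (by omega)
  · rfl

lemma finrank_le_inf_ker_add_one (S : Submodule K K[X]) [FiniteDimensional K S]
    (f : K[X] →ₗ[K] K) :
    finrank K S ≤ finrank K ↥(S ⊓ LinearMap.ker f) + 1 := by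
  have h1 := LinearMap.finrank_range_add_finrank_ker (f.domRestrict S)
  have h2 : finrank K ↥(LinearMap.range (f.domRestrict S)) ≤ 1 := by
    simpa using Submodule.finrank_le (LinearMap.range (f.domRestrict S))
  have h3 : finrank K ↥(LinearMap.ker (f.domRestrict S)) = finrank K ↥(S ⊓ LinearMap.ker f) := by
    rw [LinearMap.ker_domRestrict, ← Submodule.map_comap_subtype]
    exact ((Submodule.equivMapOfInjective S.subtype (injective_subtype S) _).finrank_eq)
  omega

lemma exists_apply_ne_zero (S : Submodule K K[X]) (f : K[X] →ₗ[K] K)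
    (h : finrank K ↥(S ⊓ LinearMap.ker f) < finrank K S) : ∃ x ∈ S, f x ≠ 0 := by
  by_contra hc
  push_neg at hc
  have hS : S ≤ LinearMap.ker f := fun x hx => LinearMap.mem_ker.2 (hc x hx)
  rw [inf_eq_left.mpr hS] at h
  exact lt_irrefl _ h

lemma exists_ne_zero_of_finrank_pos (S : Submodule K K[X]) [FiniteDimensional K S]
    (h : 0 < finrank K S) : ∃ x ∈ S, x ≠ 0 := by
  by_contra hc
  push_neg at hc
  have : S = ⊥ := (Submodule.eq_bot_iff S).2 hc
  rw [this, finrank_bot] at h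
  exact lt_irrefl _ h

instance degreeLT_fd (n : ℕ) : FiniteDimensional K ↥(degreeLT K n) :=
  (degreeLTEquiv K n).symm.finiteDimensional


/-! ### The map `Φ` and the kernel spaces `Vs` -/

noncomputable def Phi (A : K[X]) (D : ℕ) : K[X] →ₗ[K] K[X] :=
  (modByMonicHom (X^(D+1))).comp (LinearMap.mulLeft K A)

lemma Phi_apply (A : K[X]) (D : ℕ) (p : K[X]) :
    Phi A D p = (p * A) %ₘ X^(D+1) := by
  simp [Phi, modByMonicHom_apply, mul_comm]

noncomputable def tauP (A : K[X]) (D : ℕ) (p : K[X]) : K[X] := (p * A) /ₘ X^(D+1)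

noncomputable def Vs (A : K[X]) (D k : ℕ) : Submodule K K[X] :=
  degreeLT K (k+1) ⊓ (degreeLT K k).comap (Phi A D)

lemma mem_Vs {A : K[X]} {D k : ℕ} {p : K[X]} :
    p ∈ Vs A D k ↔ p ∈ degreeLT K (k+1) ∧ Phi A D p ∈ degreeLT K k := Iff.rfl

lemma F0 (A : K[X]) (D : ℕ) (p : K[X]) :
    p * A = Phi A D p + X^(D+1) * tauP A D p := by
  rw [Phi_apply, tauP]
  exact (modByMonic_add_div _ (X^(D+1))).symm

lemma Phi_memLT (A : K[X]) (D : ℕ) (p : K[X]) : Phi A D p ∈ degreeLT K (D+1) := by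
  rw [Phi_apply, mem_degreeLT]
  have := degree_modByMonic_lt (p * A) (monic_X_pow (R := K) (D+1))
  rwa [degree_X_pow] at this

lemma Phi_eq (A : K[X]) (D : ℕ) {p r s : K[X]} (h : p * A = r + X^(D+1) * s)
    (hr : r ∈ degreeLT K (D+1)) : Phi A D p = r := by
  have h1 : Phi A D p = (r + X^(D+1)*s) %ₘ X^(D+1) := by rw [Phi_apply, h]
  rw [h1, add_modByMonic,
    (modByMonic_eq_self_iff (monic_X_pow (D+1))).2 (by rw [degree_X_pow]; exact mem_degreeLT.1 hr),
    (modByMonic_eq_zero_iff_dvd (monic_X_pow (D+1))).2 ⟨s, rfl⟩, add_zero]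

lemma GI (A : K[X]) (D : ℕ) (p q : K[X]) :
    q * Phi A D p - p * Phi A D q = X^(D+1) * (p * tauP A D q - q * tauP A D p) := by
  have hp := F0 A D p
  have hq := F0 A D q
  linear_combination (-q) * hp + p * hq

lemma Phi_modX (A : K[X]) (D : ℕ) (t : K[X]) :
    Phi A D (X * t) = X * Phi A D t - C ((Phi A D t).coeff D) * X^(D+1) := by
  set γ := (Phi A D t).coeff D with hγ
  apply Phi_eq A D (s := C γ + X * tauP A D t)
  · linear_combination X * (F0 A D t)
  · rw [memLT_iff_coeff]
    intro m hm
    obtain ⟨m', rfl⟩ : ∃ m', m = m' + 1 := ⟨m - 1, by omega⟩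
    rw [coeff_sub, coeff_X_mul, coeff_C_mul, coeff_X_pow]
    rcases Nat.lt_or_ge D m' with h'' | h''
    · rw [(memLT_iff_coeff _ _).1 (Phi_memLT A D t) m' (by omega), if_neg (by omega)]
      ring
    · have hm'D : m' = D := by omega
      rw [hm'D, if_pos rfl, ← hγ]
      ring

lemma shift_mem {A : K[X]} {D : ℕ} {p : K[X]} {n k i : ℕ} (hk : k ≤ D) (hn : n + i ≤ k)
    (hp : p ∈ Vs A D n) : X^i * p ∈ Vs A D k := by
  obtain ⟨h1, h2⟩ := mem_Vs.1 hp
  have hΦ : Phi A D (X^i * p) = X^i * Phi A D p := by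
    apply Phi_eq A D (s := X^i * tauP A D p)
    · linear_combination (X:K[X])^i * F0 A D p
    · exact X_pow_mul_memLT h2 (by omega)
  exact mem_Vs.2 ⟨X_pow_mul_memLT h1 (by omega),
    by show Phi A D _ ∈ _; rw [hΦ]; exact X_pow_mul_memLT h2 (by omega)⟩


instance Vs_fd (A : K[X]) (D k : ℕ) : FiniteDimensional K ↥(Vs A D k) :=
  Submodule.finiteDimensional_of_le inf_le_left

lemma key (A : K[X]) (D N₁ N₂ : ℕ) (hN : N₁ ≤ N₂) (hsum : N₁ + N₂ = D)
    {vt wt : K[X]} (hvV : vt ∈ Vs A D (N₁+1)) (hwV : wt ∈ Vs A D (N₂+1))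
    (hw0 : wt.coeff 0 ≠ 0) {c : K} (hc : c ≠ 0)
    (hcert : vt * Phi A D wt - wt * Phi A D vt = C c * X^(D+1))
    {k : ℕ} (hk1 : N₂ < k) (hk2 : k ≤ D) {P Q : K[X]}
    (hP : P ∈ degreeLT K (k - N₁)) (hQ : Q ∈ degreeLT K (k - N₂))
    (heq : P * vt + Q * wt = 0) : P = 0 ∧ Q = 0 := by
  have hwne : wt ≠ 0 := fun h => hw0 (by rw [h]; simp)
  have hPzero : P = 0 := by
    by_contra hPne
    set R := P * Phi A D vt + Q * Phi A D wt with hR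
    have hmain : wt * R = -(C c * (P * X^(D+1))) := by
      rw [hR]
      linear_combination (-P) * hcert + Phi A D wt * heq
    have hRne : R ≠ 0 := by
      intro h0
      rw [h0, mul_zero] at hmain
      have h1 : C c * (P * X^(D+1)) = 0 := neg_eq_zero.mp hmain.symm
      rcases mul_eq_zero.mp h1 with h2 | h2
      · exact hc (C_eq_zero.mp h2)
      · rcases mul_eq_zero.mp h2 with h3 | h3
        · exact hPne h3
        · exact pow_ne_zero _ X_ne_zero h3
    have hndP : P.natDegree ≤ k - N₁ - 1 := by
      have he : k - N₁ = (k - N₁ - 1) + 1 := by omega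
      rw [he] at hP
      exact natDegree_le_of_memLT hP
    have hndQ : Q.natDegree ≤ k - N₂ - 1 := by
      have he : k - N₂ = (k - N₂ - 1) + 1 := by omega
      rw [he] at hQ
      exact natDegree_le_of_memLT hQ
    have hndPv : (P * Phi A D vt).natDegree ≤ k - 1 := by
      apply le_trans natDegree_mul_le
      have := natDegree_le_of_memLT (hvV.2 : Phi A D vt ∈ degreeLT K (N₁+1))
      omega
    have hndQw : (Q * Phi A D wt).natDegree ≤ k - 1 := by
      apply le_trans natDegree_mul_le
      have := natDegree_le_of_memLT (hwV.2 : Phi A D wt ∈ degreeLT K (N₂+1))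
      omega
    have hnd : R.natDegree ≤ k - 1 := le_trans (natDegree_add_le _ _) (max_le hndPv hndQw)
    have htr : (wt * R).natTrailingDegree = wt.natTrailingDegree + R.natTrailingDegree :=
      natTrailingDegree_mul hwne hRne
    have hw_ntd : wt.natTrailingDegree = 0 :=
      Nat.eq_zero_of_le_zero (natTrailingDegree_le_of_ne_zero hw0)
    have hrhs : D + 1 ≤ (wt * R).natTrailingDegree := by
      rw [hmain, natTrailingDegree_neg]
      have h4 : (C c * (P * X^(D+1))).natTrailingDegree
          = (C c).natTrailingDegree + (P * X^(D+1)).natTrailingDegree := by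
        apply natTrailingDegree_mul (by simpa using hc)
        exact mul_ne_zero hPne (pow_ne_zero _ X_ne_zero)
      have h5 : (P * X^(D+1)).natTrailingDegree = P.natTrailingDegree + (D+1) := by
        rw [natTrailingDegree_mul hPne (pow_ne_zero _ X_ne_zero), X_pow_eq_monomial,
          natTrailingDegree_monomial one_ne_zero]
      rw [h4, h5]
      omega
    have hfin : R.natTrailingDegree ≤ R.natDegree := natTrailingDegree_le_natDegree R
    omega
  refine ⟨hPzero, ?_⟩
  rw [hPzero, zero_mul, zero_add] at heq
  exact (mul_eq_zero.mp heq).resolve_right hwne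


lemma core (A : K[X]) (D N₁ N₂ : ℕ) (hN : N₁ ≤ N₂) (hN₁ : 1 ≤ N₁) (hsum : N₁ + N₂ = D)
    (hdimV : ∀ k, 1 ≤ k → k ≤ D → finrank K ↥(Vs A D k) = (k - N₁) + (k - N₂))
    {vt : K[X]} (hvV : vt ∈ Vs A D (N₁+1)) (hv0 : vt ≠ 0) :
    ∃ wt ∈ Vs A D (N₂+1), wt.coeff 0 ≠ 0 ∧ ∃ c : K, c ≠ 0 ∧
      vt * Phi A D wt - wt * Phi A D vt = C c * X^(D+1) := by
  have hD2 : N₂ + 1 ≤ D := by omega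
  have hN₂1 : 1 ≤ N₂ := by omega
  -- the functionals
  set c0 : K[X] →ₗ[K] K := lcoeff K 0 with hc0def
  set cD : K[X] →ₗ[K] K := (lcoeff K D).comp (Phi A D) with hcDdef
  -- the space T of `t` with `X*t ∈ Vs (N₂+1)`
  set T : Submodule K K[X] :=
    degreeLT K (N₂+1) ⊓ (degreeLT K (N₂+1)).comap ((Phi A D).comp (LinearMap.mulLeft K X))
    with hTdef
  have mem_T : ∀ t : K[X], t ∈ T ↔
      t ∈ degreeLT K (N₂+1) ∧ Phi A D (X * t) ∈ degreeLT K (N₂+1) := by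
    intro t
    simp [hTdef, Submodule.mem_inf, Submodule.mem_comap, LinearMap.mulLeft_apply]
  -- image of T under multiplication by X
  have hmapT : Submodule.map (LinearMap.mulLeft K X) T
      = Vs A D (N₂+1) ⊓ LinearMap.ker c0 := by
    apply le_antisymm
    · rintro u hu
      obtain ⟨t, ht, rfl⟩ := Submodule.mem_map.mp hu
      obtain ⟨ht1, ht2⟩ := (mem_T t).mp ht
      have hXt : (LinearMap.mulLeft K X) t = X * t := rfl
      rw [hXt]
      refine Submodule.mem_inf.mpr ⟨mem_Vs.2 ⟨?_, ?_⟩, ?_⟩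
      · have : (X:K[X])^1 * t ∈ degreeLT K (N₂+1+1) := X_pow_mul_memLT ht1 (by omega)
        rwa [pow_one] at this
      · exact ht2
      · rw [LinearMap.mem_ker, hc0def, lcoeff_apply, mul_coeff_zero, coeff_X_zero, zero_mul]
    · rintro u hu
      obtain ⟨huV, huk⟩ := Submodule.mem_inf.mp hu
      have hu0 : u.coeff 0 = 0 := huk
      have hXd : X * u.divX = u := by
        have := X_mul_divX_add u
        rwa [hu0, map_zero, add_zero] at this
      refine Submodule.mem_map.mpr ⟨u.divX, (mem_T _).mpr ⟨?_, ?_⟩, hXd⟩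
      · rw [memLT_iff_coeff]
        intro m hm
        rw [coeff_divX]
        exact (memLT_iff_coeff _ _).1 huV.1 (m+1) (by omega)
      · rw [hXd]; exact huV.2
  -- finite dimensionality
  haveI : FiniteDimensional K ↥T := Submodule.finiteDimensional_of_le inf_le_left
  -- finrank values
  have fV2 : finrank K ↥(Vs A D (N₂+1)) = N₂ + 1 - N₁ + 1 := by
    rw [hdimV (N₂+1) (by omega) hD2]; omega
  have fV1 : finrank K ↥(Vs A D N₂) = N₂ - N₁ := by
    rw [hdimV N₂ hN₂1 (by omega)]; omega
  -- mul by X is injective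
  have hXinj : Function.Injective (LinearMap.mulLeft K (X : K[X])) := by
    intro p q h
    exact mul_left_cancel₀ X_ne_zero h
  have hfrT : finrank K ↥(Vs A D (N₂+1) ⊓ LinearMap.ker c0) = finrank K ↥T := by
    rw [← hmapT]
    exact (Submodule.equivMapOfInjective _ hXinj T).finrank_eq.symm
  -- T ∩ ker cD ⊆ Vs N₂
  have hTleft : T ⊓ LinearMap.ker cD ≤ Vs A D N₂ := by
    rintro t ht
    obtain ⟨htT, htk⟩ := Submodule.mem_inf.mp ht
    obtain ⟨ht1, ht2⟩ := (mem_T t).mp htT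
    have hcoD : (Phi A D t).coeff D = 0 := htk
    have hmod : Phi A D (X * t) = X * Phi A D t := by
      rw [Phi_modX, hcoD, map_zero, zero_mul, sub_zero]
    refine mem_Vs.2 ⟨ht1, ?_⟩
    rw [memLT_iff_coeff]
    intro m hm
    have : (X * Phi A D t).coeff (m+1) = 0 := by
      rw [← hmod]
      exact (memLT_iff_coeff _ _).1 ht2 (m+1) (by omega)
    rwa [coeff_X_mul] at this
  have h3 : finrank K ↥T ≤ finrank K ↥(T ⊓ LinearMap.ker cD) + 1 :=
    finrank_le_inf_ker_add_one T cD
  have h4 : finrank K ↥(T ⊓ LinearMap.ker cD) ≤ finrank K ↥(Vs A D N₂) :=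
    Submodule.finrank_mono hTleft
  have hub2 : finrank K ↥(Vs A D (N₂+1)) ≤ finrank K ↥(Vs A D (N₂+1) ⊓ LinearMap.ker c0) + 1 :=
    finrank_le_inf_ker_add_one _ c0
  -- u₀ with nonzero constant coefficient
  obtain ⟨u₀, hu₀V, hu₀0'⟩ : ∃ u ∈ Vs A D (N₂+1), c0 u ≠ 0 := by
    apply exists_apply_ne_zero
    omega
  have hu₀0 : u₀.coeff 0 ≠ 0 := hu₀0'
  -- t⋆ with nonzero discrepancy
  obtain ⟨ts, htsT, hγ'⟩ : ∃ t ∈ T, cD t ≠ 0 := by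
    apply exists_apply_ne_zero
    omega
  have hγ : (Phi A D ts).coeff D ≠ 0 := hγ'
  -- refutation of (*)
  have hstar : ∃ u ∈ Vs A D (N₂+1), vt * Phi A D u ≠ u * Phi A D vt := by
    by_contra hs
    push_neg at hs
    obtain ⟨hts1, hts2⟩ := (mem_T ts).mp htsT
    have hXt : X * ts ∈ Vs A D (N₂+1) := by
      refine mem_Vs.2 ⟨?_, hts2⟩
      have : (X:K[X])^1 * ts ∈ degreeLT K (N₂+1+1) := X_pow_mul_memLT hts1 (by omega)
      rwa [pow_one] at this
    have h1 : vt * Phi A D (X * ts) = (X * ts) * Phi A D vt := hs _ hXt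
    rw [Phi_modX] at h1
    have h2 : X * (vt * Phi A D ts - ts * Phi A D vt)
        = C ((Phi A D ts).coeff D) * X^(D+1) * vt := by
      linear_combination h1
    rw [GI A D ts vt] at h2
    have h4 : X * (ts * tauP A D vt - vt * tauP A D ts) = C ((Phi A D ts).coeff D) * vt := by
      have hMne : (X : K[X])^(D+1) ≠ 0 := pow_ne_zero _ X_ne_zero
      apply mul_left_cancel₀ hMne
      linear_combination h2
    have hvc0 : vt.coeff 0 = 0 := by
      have h5 := congrArg (fun p : K[X] => p.coeff 0) h4
      simp only [mul_coeff_zero, coeff_X_zero, zero_mul, coeff_C_zero] at h5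
      rcases mul_eq_zero.mp h5.symm with h6 | h6
      · exact absurd h6 hγ
      · exact h6
    -- facts from u₀
    have h5 : vt * Phi A D u₀ = u₀ * Phi A D vt := hs _ hu₀V
    have h6 : u₀ * tauP A D vt = vt * tauP A D u₀ := by
      have h7 := GI A D u₀ vt
      rw [h5, sub_self] at h7
      have h8 := (mul_eq_zero.mp h7.symm).resolve_left (pow_ne_zero _ X_ne_zero)
      linear_combination h8
    have hphi0 : (Phi A D vt).coeff 0 = 0 := by
      have h9 := congrArg (fun p : K[X] => p.coeff 0) h5
      simp only [mul_coeff_zero, hvc0, zero_mul] at h9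
      exact (mul_eq_zero.mp h9.symm).resolve_left hu₀0
    have htau0 : (tauP A D vt).coeff 0 = 0 := by
      have h10 := congrArg (fun p : K[X] => p.coeff 0) h6
      simp only [mul_coeff_zero, hvc0, zero_mul] at h10
      exact (mul_eq_zero.mp h10).resolve_left hu₀0
    -- divide everything by X
    have hvs : X * vt.divX = vt := by
      have := X_mul_divX_add vt; rwa [hvc0, map_zero, add_zero] at this
    have hσ : X * (Phi A D vt).divX = Phi A D vt := by
      have := X_mul_divX_add (Phi A D vt); rwa [hphi0, map_zero, add_zero] at this
    have hρ : X * (tauP A D vt).divX = tauP A D vt := by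
      have := X_mul_divX_add (tauP A D vt); rwa [htau0, map_zero, add_zero] at this
    have hsA : vt.divX * A = (Phi A D vt).divX + X^(D+1) * (tauP A D vt).divX := by
      apply mul_left_cancel₀ (X_ne_zero (R := K))
      linear_combination A * hvs + F0 A D vt - hσ - X^(D+1) * hρ
    have hPhis : Phi A D vt.divX = (Phi A D vt).divX := by
      apply Phi_eq A D hsA
      rw [memLT_iff_coeff]
      intro m hm
      rw [coeff_divX]
      exact (memLT_iff_coeff _ _).1 (Phi_memLT A D vt) (m+1) (by omega)
    have hsV : vt.divX ∈ Vs A D N₁ := by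
      refine mem_Vs.2 ⟨?_, ?_⟩
      · rw [memLT_iff_coeff]
        intro m hm
        rw [coeff_divX]
        exact (memLT_iff_coeff _ _).1 hvV.1 (m+1) (by omega)
      · rw [hPhis, memLT_iff_coeff]
        intro m hm
        rw [coeff_divX]
        exact (memLT_iff_coeff _ _).1 hvV.2 (m+1) (by omega)
    have hbot : Vs A D N₁ = ⊥ := by
      apply Submodule.finrank_eq_zero.mp
      rw [hdimV N₁ hN₁ (by omega)]
      omega
    rw [hbot, Submodule.mem_bot] at hsV
    apply hv0
    rw [← hvs, hsV, mul_zero]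
  -- the pairing functional β
  set β : K[X] →ₗ[K] K := (lcoeff K (D+1)).comp
      ((LinearMap.mulLeft K vt).comp (Phi A D) - LinearMap.mulLeft K (Phi A D vt)) with hβdef
  have hβ : ∀ u : K[X], β u = (vt * Phi A D u - u * Phi A D vt).coeff (D+1) := by
    intro u
    simp only [hβdef, LinearMap.comp_apply, LinearMap.sub_apply, lcoeff_apply,
      LinearMap.mulLeft_apply, coeff_sub]
    ring_nf
  -- the certificate identity for members of Vs (N₂+1)
  have hcert : ∀ u ∈ Vs A D (N₂+1),
      vt * Phi A D u - u * Phi A D vt = C (β u) * X^(D+1) := by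
    intro u hu
    have hGI := GI A D u vt
    have hdlt : vt * Phi A D u - u * Phi A D vt ∈ degreeLT K (D+2) := by
      apply Submodule.sub_mem
      · have h1 := mul_memLT (hvV.1 : vt ∈ degreeLT K (N₁+1+1)) (hu.2 : Phi A D u ∈ degreeLT K (N₂+1))
        have he : N₁ + 1 + N₂ + 1 = D + 2 := by omega
        rwa [he] at h1
      · have h1 := mul_memLT (hu.1 : u ∈ degreeLT K (N₂+1+1)) (hvV.2 : Phi A D vt ∈ degreeLT K (N₁+1))
        have he : N₂ + 1 + N₁ + 1 = D + 2 := by omega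
        rwa [he] at h1
    rw [hGI] at hdlt ⊢
    have hconst : u * tauP A D vt - vt * tauP A D u
        = C ((u * tauP A D vt - vt * tauP A D u).coeff 0) := by
      by_cases h0 : u * tauP A D vt - vt * tauP A D u = 0
      · rw [h0]; simp
      · have hdeg : degree ((X:K[X])^(D+1) * (u * tauP A D vt - vt * tauP A D u))
            = (D+1 : ℕ) + degree (u * tauP A D vt - vt * tauP A D u) := by
          rw [degree_mul, degree_X_pow]
        have hlt : degree ((X:K[X])^(D+1) * (u * tauP A D vt - vt * tauP A D u))
            < ((D+2 : ℕ) : WithBot ℕ) := mem_degreeLT.1 hdlt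
        rw [hdeg, degree_eq_natDegree h0] at hlt
        have hlt2 : ((D + 1 + (u * tauP A D vt - vt * tauP A D u).natDegree : ℕ) : WithBot ℕ)
            < ((D+2 : ℕ) : WithBot ℕ) := by
          rwa [Nat.cast_add]
        have hnd : (u * tauP A D vt - vt * tauP A D u).natDegree = 0 := by
          have := Nat.cast_lt.mp hlt2
          omega
        exact eq_C_of_natDegree_le_zero (le_of_eq hnd)
    have hβu : β u = (u * tauP A D vt - vt * tauP A D u).coeff 0 := by
      rw [hβ, hGI]
      conv_lhs => rw [hconst]
      rw [mul_comm, coeff_C_mul, coeff_X_pow, if_pos rfl, mul_one]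
    rw [hβu]
    conv_lhs => rw [hconst]
    exact mul_comm _ _
  -- β is nonzero somewhere on Vs (N₂+1)
  obtain ⟨ub, hubV, hubne⟩ := hstar
  have hβub : β ub ≠ 0 := by
    intro h0
    apply hubne
    have := hcert ub hubV
    rw [h0, map_zero, zero_mul] at this
    exact sub_eq_zero.mp this
  -- combine the two nonvanishing conditions
  obtain ⟨wt, hwtV, hwt0, hwtβ⟩ : ∃ w ∈ Vs A D (N₂+1), w.coeff 0 ≠ 0 ∧ β w ≠ 0 := by
    by_cases h1 : β u₀ ≠ 0
    · exact ⟨u₀, hu₀V, hu₀0, h1⟩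
    · push_neg at h1
      by_cases h2 : ub.coeff 0 ≠ 0
      · exact ⟨ub, hubV, h2, hβub⟩
      · push_neg at h2
        refine ⟨u₀ + ub, Submodule.add_mem _ hu₀V hubV, ?_, ?_⟩
        · rw [coeff_add, h2, add_zero]; exact hu₀0
        · rw [map_add, h1, zero_add]; exact hβub
  exact ⟨wt, hwtV, hwt0, β wt, hwtβ, hcert wt hwtV⟩


lemma toP_mul (n : ℕ) (g : Fin n → K) (p : K[X]) :
    toP n g * p = ∑ i : Fin n, g i • (X^(i:ℕ) * p) := by
  simp only [toP, LinearMap.coe_mk, AddHom.coe_mk, Finset.sum_mul]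
  refine Finset.sum_congr rfl (fun i _ => ?_)
  rw [smul_eq_C_mul, ← C_mul_X_pow_eq_monomial, mul_assoc]

lemma span_eq_of_finrank {ι : Type*} [Fintype ι] (S : Submodule K K[X])
    [FiniteDimensional K ↥S] (f : ι → K[X]) (hmem : ∀ i, f i ∈ S)
    (hindep : LinearIndependent K f) (hfr : finrank K ↥S = Fintype.card ι) :
    Submodule.span K (Set.range f) = S := by
  apply Submodule.eq_of_le_of_finrank_le
  · rw [Submodule.span_le]
    rintro _ ⟨i, rfl⟩
    exact hmem i
  · rw [hfr, finrank_span_eq_card hindep]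


/-! ### Transfer between Hankel kernels and `Vs` -/

noncomputable def AP (a : ℕ → K) (D : ℕ) : K[X] :=
  ∑ m ∈ Finset.range (D+1), monomial m (a (D - m))

lemma AP_coeff (a : ℕ → K) (D : ℕ) {i : ℕ} (hi : i ≤ D) : (AP a D).coeff i = a (D - i) := by
  rw [AP, finset_sum_coeff, Finset.sum_eq_single i]
  · rw [coeff_monomial, if_pos rfl]
  · intro b _ hb
    rw [coeff_monomial, if_neg hb]
  · intro h
    exact absurd (Finset.mem_range.mpr (by omega)) h

lemma Phi_coeff_low (A : K[X]) (D : ℕ) (p : K[X]) {m : ℕ} (hm : m ≤ D) :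
    (Phi A D p).coeff m = (p * A).coeff m := by
  have h := congrArg (fun q : K[X] => q.coeff m) (F0 A D p)
  simp only [coeff_add] at h
  have h2 : ((X:K[X])^(D+1) * tauP A D p).coeff m = 0 := by
    rw [X_pow_mul, coeff_mul_X_pow', if_neg (by omega)]
  rw [h2, add_zero] at h
  exact h.symm

lemma row_coeff (a : ℕ → K) (D k : ℕ) (u : Fin (k+1) → K) {m : ℕ}
    (hm1 : k ≤ m) (hm2 : m ≤ D) :
    (toP (k+1) u * AP a D).coeff m = ∑ j : Fin (k+1), a ((D - m) + j) * u j := by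
  simp only [toP, LinearMap.coe_mk, AddHom.coe_mk, Finset.sum_mul, finset_sum_coeff]
  refine Finset.sum_congr rfl (fun j _ => ?_)
  rw [← C_mul_X_pow_eq_monomial, mul_assoc, coeff_C_mul, X_pow_mul, coeff_mul_X_pow',
    if_pos (by omega : (j:ℕ) ≤ m), AP_coeff a D (by omega : m - (j:ℕ) ≤ D)]
  have he : D - (m - (j:ℕ)) = D - m + (j:ℕ) := by omega
  rw [he, mul_comm]

lemma hankel_row (a : ℕ → K) (D k : ℕ) (u : Fin (k+1) → K) (i : Fin (D - k + 1)) :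
    (hankel a D k).mulVecLin u i = ∑ j : Fin (k+1), a (i.1 + j.1) * u j := by
  simp [Matrix.mulVecLin_apply, Matrix.mulVec, dotProduct, hankel]

lemma kernel_map (a : ℕ → K) (D k : ℕ) (hk : k ≤ D) :
    Submodule.map (toP (k+1)) (LinearMap.ker ((hankel a D k).mulVecLin))
      = Vs (AP a D) D k := by
  apply le_antisymm
  · rintro _ ⟨u, hu, rfl⟩
    have hu' : (hankel a D k).mulVecLin u = 0 := hu
    refine mem_Vs.2 ⟨toP_memLT _ _, ?_⟩
    rw [memLT_iff_coeff]
    intro m hm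
    rcases Nat.lt_or_ge m (D+1) with hmD | hmD
    · rw [Phi_coeff_low _ _ _ (by omega : m ≤ D), row_coeff a D k u hm (by omega)]
      have hrow := congrFun hu' ⟨D - m, by omega⟩
      rw [hankel_row] at hrow
      simpa using hrow
    · exact (memLT_iff_coeff _ _).1 (Phi_memLT _ _ _) m (by omega)
  · intro p hp
    refine ⟨fun j => p.coeff j, ?_, toP_coeffs_eq _ p hp.1⟩
    show (hankel a D k).mulVecLin (fun j => p.coeff j) = 0
    funext i
    rw [hankel_row a D k _ i]
    have hi : i.1 ≤ D - k := by omega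
    have hm1 : k ≤ D - i.1 := by omega
    have hm2 : D - i.1 ≤ D := by omega
    have hDi : D - (D - i.1) = i.1 := by omega
    have h2 := row_coeff a D k (fun j : Fin (k+1) => p.coeff j) hm1 hm2
    rw [hDi] at h2
    rw [← h2, toP_coeffs_eq _ p hp.1, ← Phi_coeff_low _ _ _ hm2]
    have := (memLT_iff_coeff _ _).1 hp.2 (D - i.1) hm1
    rw [this]
    rfl

lemma finrank_ker_eq (a : ℕ → K) (D k : ℕ) (hk : k ≤ D) :
    finrank K ↥(LinearMap.ker ((hankel a D k).mulVecLin))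
      = finrank K ↥(Vs (AP a D) D k) := by
  rw [← kernel_map a D k hk]
  exact (Submodule.equivMapOfInjective _ (toP_inj (k+1)) _).finrank_eq


/-! ### Bullet-level lemmas -/

lemma shift_coeff (n : ℕ) (p : K[X]) (hp : p ∈ degreeLT K n) (i m : ℕ) :
    shiftVec (pad (fun j : Fin n => p.coeff j)) i m = (X^i * p).coeff m := by
  rw [shiftVec, X_pow_mul, coeff_mul_X_pow']
  split
  · rw [pad]
    split
    · rfl
    · next h => exact ((memLT_iff_coeff _ _).1 hp _ (by omega)).symm
  · rfl

lemma toP_shift (k n i : ℕ) (p : K[X]) (hp : p ∈ degreeLT K n)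
    (hm : X^i * p ∈ degreeLT K (k+1)) :
    toP (k+1) (fun t : Fin (k+1) => shiftVec (pad (fun j : Fin n => p.coeff j)) i t.1)
      = X^i * p := by
  have he : (fun t : Fin (k+1) => shiftVec (pad (fun j : Fin n => p.coeff j)) i t.1)
      = fun t : Fin (k+1) => (X^i * p).coeff t.1 :=
    funext (fun t => shift_coeff n p hp i t.1)
  rw [he]
  exact toP_coeffs_eq _ _ hm

lemma bullet1 (a : ℕ → K) (D N₁ N₂ k : ℕ)
    (h0 : finrank K ↥(LinearMap.ker ((hankel a D k).mulVecLin))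
      = max 0 (k - N₁) + max 0 (k - N₂))
    (hk2 : k ≤ N₁) (hN : N₁ ≤ N₂) :
    LinearMap.ker ((hankel a D k).mulVecLin) = ⊥ := by
  apply Submodule.finrank_eq_zero.mp
  rw [h0]
  omega

lemma bullet2 (a : ℕ → K) (D N₁ N₂ : ℕ) (hN : N₁ ≤ N₂) (hsum : N₁ + N₂ = D)
    (hfr : ∀ k, 1 ≤ k → k ≤ D → finrank K ↥(Vs (AP a D) D k) = (k - N₁) + (k - N₂))
    {vt : K[X]} (hvtV : vt ∈ Vs (AP a D) D (N₁+1)) (hvt0 : vt ≠ 0)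
    (k : ℕ) (hk1 : N₁ < k) (hk2 : k ≤ N₂) :
    LinearIndependent K (fun i : Fin (k - N₁) => fun t : Fin (k + 1) =>
      shiftVec (pad (fun j : Fin (N₁+2) => vt.coeff j)) i.1 t.1) ∧
    LinearMap.ker ((hankel a D k).mulVecLin)
      = Submodule.span K (Set.range (fun i : Fin (k - N₁) => fun t : Fin (k + 1) =>
          shiftVec (pad (fun j : Fin (N₁+2) => vt.coeff j)) i.1 t.1)) := by
  have hkD : k ≤ D := by omega
  have hmem : ∀ i : Fin (k - N₁), X^(i.1) * vt ∈ Vs (AP a D) D k := by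
    intro i
    exact shift_mem hkD (by have := i.isLt; omega) hvtV
  have hindep : LinearIndependent K (fun i : Fin (k - N₁) => X^(i.1) * vt) := by
    rw [Fintype.linearIndependent_iff]
    intro g hg
    have h1 : toP (k - N₁) g * vt = 0 := by rw [toP_mul]; exact hg
    have h2 : toP (k - N₁) g = 0 := (mul_eq_zero.mp h1).resolve_right hvt0
    intro i
    have h3 := congrArg (fun q : K[X] => q.coeff i.1) h2
    simpa [toP_coeff, i.isLt] using h3
  have hcomp : (⇑(toP (k+1)) ∘ (fun i : Fin (k - N₁) => fun t : Fin (k+1) =>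
      shiftVec (pad (fun j : Fin (N₁+2) => vt.coeff j)) i.1 t.1))
      = fun i : Fin (k - N₁) => X^(i.1) * vt :=
    funext (fun i => by
      have h := toP_shift k (N₁+2) i.1 vt (mem_Vs.1 hvtV).1 (mem_Vs.1 (hmem i)).1
      exact h)
  constructor
  · exact LinearIndependent.of_comp (toP (k+1)) (by rw [hcomp]; exact hindep)
  · have hspan : Submodule.span K (Set.range (fun i : Fin (k - N₁) => X^(i.1) * vt))
        = Vs (AP a D) D k := by
      apply span_eq_of_finrank _ _ hmem hindep
      rw [hfr k (by omega) hkD, Fintype.card_fin]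
      omega
    apply Submodule.map_injective_of_injective (toP_inj (k+1))
    rw [kernel_map a D k hkD, Submodule.map_span, ← Set.range_comp, hcomp, hspan]

lemma bullet3 (a : ℕ → K) (D N₁ N₂ : ℕ) (hN : N₁ ≤ N₂) (hsum : N₁ + N₂ = D)
    (hfr : ∀ k, 1 ≤ k → k ≤ D → finrank K ↥(Vs (AP a D) D k) = (k - N₁) + (k - N₂))
    {vt wt : K[X]} (hvtV : vt ∈ Vs (AP a D) D (N₁+1)) (hvt0 : vt ≠ 0)
    (hwtV : wt ∈ Vs (AP a D) D (N₂+1)) (hwt0 : wt.coeff 0 ≠ 0)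
    {c : K} (hc : c ≠ 0)
    (hcert : vt * Phi (AP a D) D wt - wt * Phi (AP a D) D vt = C c * X^(D+1))
    (k : ℕ) (hk1 : N₂ < k) (hk2 : k ≤ D) :
    LinearIndependent K
      (Sum.elim
        (fun i : Fin (k - N₁) => fun t : Fin (k + 1) =>
          shiftVec (pad (fun j : Fin (N₁+2) => vt.coeff j)) i.1 t.1)
        (fun i : Fin (k - N₂) => fun t : Fin (k + 1) =>
          shiftVec (pad (fun j : Fin (N₂+2) => wt.coeff j)) i.1 t.1)) ∧
    LinearMap.ker ((hankel a D k).mulVecLin)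
      = Submodule.span K
          (Set.range (fun i : Fin (k - N₁) => fun t : Fin (k + 1) =>
          shiftVec (pad (fun j : Fin (N₁+2) => vt.coeff j)) i.1 t.1) ∪
           Set.range (fun i : Fin (k - N₂) => fun t : Fin (k + 1) =>
             shiftVec (pad (fun j : Fin (N₂+2) => wt.coeff j)) i.1 t.1)) := by
  have hmemv : ∀ i : Fin (k - N₁), X^(i.1) * vt ∈ Vs (AP a D) D k := by
    intro i
    exact shift_mem hk2 (by have := i.isLt; omega) hvtV
  have hmemw : ∀ i : Fin (k - N₂), X^(i.1) * wt ∈ Vs (AP a D) D k := by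
    intro i
    exact shift_mem hk2 (by have := i.isLt; omega) hwtV
  have hindep : LinearIndependent K (Sum.elim
      (fun i : Fin (k - N₁) => X^(i.1) * vt) (fun i : Fin (k - N₂) => X^(i.1) * wt)) := by
    rw [Fintype.linearIndependent_iff]
    intro g hg
    rw [Fintype.sum_sum_type] at hg
    simp only [Sum.elim_inl, Sum.elim_inr] at hg
    have h1 : toP (k - N₁) (g ∘ Sum.inl) * vt + toP (k - N₂) (g ∘ Sum.inr) * wt = 0 := by
      rw [toP_mul, toP_mul]
      exact hg
    obtain ⟨hP0, hQ0⟩ := key (AP a D) D N₁ N₂ hN hsum hvtV hwtV hwt0 hc hcert hk1 hk2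
      (toP_memLT _ _) (toP_memLT _ _) h1
    intro i
    rcases i with i | i
    · have h3 := congrArg (fun q : K[X] => q.coeff i.1) hP0
      simpa [toP_coeff, i.isLt, Function.comp] using h3
    · have h3 := congrArg (fun q : K[X] => q.coeff i.1) hQ0
      simpa [toP_coeff, i.isLt, Function.comp] using h3
  have hcompv : (⇑(toP (k+1)) ∘ (fun i : Fin (k - N₁) => fun t : Fin (k + 1) =>
          shiftVec (pad (fun j : Fin (N₁+2) => vt.coeff j)) i.1 t.1))
      = fun i : Fin (k - N₁) => X^(i.1) * vt :=
    funext (fun i => by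
      have h := toP_shift k (N₁+2) i.1 vt (mem_Vs.1 hvtV).1 (mem_Vs.1 (hmemv i)).1
      exact h)
  have hcompw : (⇑(toP (k+1)) ∘ (fun i : Fin (k - N₂) => fun t : Fin (k+1) =>
      shiftVec (pad (fun j : Fin (N₂+2) => wt.coeff j)) i.1 t.1))
      = fun i : Fin (k - N₂) => X^(i.1) * wt :=
    funext (fun i => by
      have h := toP_shift k (N₂+2) i.1 wt (mem_Vs.1 hwtV).1 (mem_Vs.1 (hmemw i)).1
      exact h)
  have hcompsum : (⇑(toP (k+1)) ∘ (Sum.elim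
      (fun i : Fin (k - N₁) => fun t : Fin (k + 1) =>
          shiftVec (pad (fun j : Fin (N₁+2) => vt.coeff j)) i.1 t.1)
      (fun i : Fin (k - N₂) => fun t : Fin (k+1) =>
        shiftVec (pad (fun j : Fin (N₂+2) => wt.coeff j)) i.1 t.1)))
      = Sum.elim (fun i : Fin (k - N₁) => X^(i.1) * vt)
          (fun i : Fin (k - N₂) => X^(i.1) * wt) := by
    funext x
    rcases x with i | i
    · exact congrFun hcompv i
    · exact congrFun hcompw i
  constructor
  · exact LinearIndependent.of_comp (toP (k+1)) (by rw [hcompsum]; exact hindep)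
  · have hspan : Submodule.span K (Set.range (Sum.elim
        (fun i : Fin (k - N₁) => X^(i.1) * vt) (fun i : Fin (k - N₂) => X^(i.1) * wt)))
        = Vs (AP a D) D k := by
      apply span_eq_of_finrank _ _ ?_ hindep ?_
      · rintro (i | i)
        · exact hmemv i
        · exact hmemw i
      · rw [hfr k (by omega) hk2, Fintype.card_sum, Fintype.card_fin, Fintype.card_fin]
    apply Submodule.map_injective_of_injective (toP_inj (k+1))
    rw [kernel_map a D k hk2, Submodule.map_span, Set.image_union, ← Set.range_comp,
      ← Set.range_comp, hcompv, hcompw, ← Set.Sum.elim_range, hspan]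

end Stmt3Aux

/-- Structure of the kernels of a Hankel family: U-chains of `v` and `w` give bases. -/
theorem stmt3 {K : Type*} [Field K] (D N₁ N₂ : ℕ) (a : ℕ → K)
    (hN : N₁ ≤ N₂) (hsum : N₁ + N₂ = D)
    (hdim : ∀ k, 1 ≤ k → k ≤ D →
      Module.finrank K (LinearMap.ker ((hankel a D k).mulVecLin))
        = max 0 (k - N₁) + max 0 (k - N₂)) :
    ∃ (v : Fin (N₁ + 2) → K) (w : Fin (N₂ + 2) → K),
      (∀ k, 1 ≤ k → k ≤ N₁ → LinearMap.ker ((hankel a D k).mulVecLin) = ⊥) ∧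
      (∀ k, N₁ < k → k ≤ N₂ →
        LinearIndependent K
          (fun i : Fin (k - N₁) => fun t : Fin (k + 1) => shiftVec (pad v) i.1 t.1) ∧
        LinearMap.ker ((hankel a D k).mulVecLin)
          = Submodule.span K (Set.range
              (fun i : Fin (k - N₁) => fun t : Fin (k + 1) => shiftVec (pad v) i.1 t.1))) ∧
      (∀ k, N₂ < k → k ≤ D →
        LinearIndependent K
          (Sum.elim
            (fun i : Fin (k - N₁) => fun t : Fin (k + 1) => shiftVec (pad v) i.1 t.1)
            (fun i : Fin (k - N₂) => fun t : Fin (k + 1) => shiftVec (pad w) i.1 t.1)) ∧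
        LinearMap.ker ((hankel a D k).mulVecLin)
          = Submodule.span K
              (Set.range
                (fun i : Fin (k - N₁) => fun t : Fin (k + 1) => shiftVec (pad v) i.1 t.1) ∪
               Set.range
                (fun i : Fin (k - N₂) => fun t : Fin (k + 1) => shiftVec (pad w) i.1 t.1))) := by
  classical
  by_cases hN₂0 : N₂ = 0
  · exact ⟨0, 0, fun k hk1 hk2 => absurd hk2 (by omega),
      fun k hk1 hk2 => absurd hk2 (by omega),
      fun k hk1 hk2 => absurd hk2 (by omega)⟩
  · have hfr : ∀ k, 1 ≤ k → k ≤ D →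
        Module.finrank K ↥(Stmt3Aux.Vs (Stmt3Aux.AP a D) D k) = (k - N₁) + (k - N₂) := by
      intro k hk1 hk2
      rw [← Stmt3Aux.finrank_ker_eq a D k hk2, hdim k hk1 hk2]
      omega
    have hpos : 0 < Module.finrank K ↥(Stmt3Aux.Vs (Stmt3Aux.AP a D) D (N₁+1)) := by
      rw [hfr (N₁+1) (by omega) (by omega)]
      omega
    obtain ⟨vt, hvtV, hvt0⟩ := Stmt3Aux.exists_ne_zero_of_finrank_pos _ hpos
    have b1 : ∀ k, 1 ≤ k → k ≤ N₁ → LinearMap.ker ((hankel a D k).mulVecLin) = ⊥ :=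
      fun k hk1 hk2 => Stmt3Aux.bullet1 a D N₁ N₂ k (hdim k hk1 (by omega)) hk2 hN
    rcases Nat.eq_zero_or_pos N₁ with hN₁0 | hN₁pos
    · exact ⟨fun j => vt.coeff j, 0, b1,
        fun k hk1 hk2 => Stmt3Aux.bullet2 a D N₁ N₂ hN hsum hfr hvtV hvt0 k hk1 hk2,
        fun k hk1 hk2 => absurd hk2 (by omega)⟩
    · obtain ⟨wt, hwtV, hwt0, c, hc, hcert⟩ :=
        Stmt3Aux.core (Stmt3Aux.AP a D) D N₁ N₂ hN hN₁pos hsum hfr hvtV hvt0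
      exact ⟨fun j => vt.coeff j, fun j => wt.coeff j, b1,
        fun k hk1 hk2 => Stmt3Aux.bullet2 a D N₁ N₂ hN hsum hfr hvtV hvt0 k hk1 hk2,
        fun k hk1 hk2 =>
          Stmt3Aux.bullet3 a D N₁ N₂ hN hsum hfr hvtV hvt0 hwtV hwt0 hc hcert k hk1 hk2⟩
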